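/- If d_H(ĝ_k, g*) ≤ ε, where ĝ_k and g* are continuous strictly positive functions on a compact set S_T, both bounded in [g_min, g_max] with 0 < g_min ≤ g_max, and both integrate to 1 over S_T (S_T connected compact with positive Lebesgue measure), then ‖ĝ_k − g*‖_∞ ≤ (g_max²/g_min) · ε·e^ε in terms of the Hilbert metric bound; in particular sup-norm error is controlled by a constant times the Hilbert distance. -/

import Mathlib

open MeasureTheory

/-- Hilbert projective metric: `d_H(f,g) = log( sup (f/g) / inf (f/g) )`. -/
noncomputable def dH {α : Type*} (f g : α → ℝ) : ℝ :=
  Real.log ((⨆ x, f x / g x) / (⨅ x, f x / g x))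

lemma posint {n : ℕ} {S : Set (EuclideanSpace ℝ (Fin n))}
    (hSc : IsCompact S) (hne : S.Nonempty) (hvol : 0 < volume S)
    {h : EuclideanSpace ℝ (Fin n) → ℝ} (hc : ContinuousOn h S)
    (hpos : ∀ x ∈ S, 0 < h x) : 0 < ∫ x in S, h x := by
  obtain ⟨a, haS, hmin⟩ := hSc.exists_isMinOn hne hc
  have hca : 0 < h a := hpos a haS
  have h1 : ∫ x in S, h a ≤ ∫ x in S, h x := by
    apply setIntegral_mono_on
    · exact integrableOn_const hSc.measure_lt_top.ne
    · exact hc.integrableOn_compact hSc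
    · exact hSc.measurableSet
    · exact fun x hx => hmin hx
  have h2 : ∫ x in S, h a = (volume S).toReal * h a := by
    simp [setIntegral_const, smul_eq_mul, Measure.real]
  have h3 : 0 < (volume S).toReal :=
    ENNReal.toReal_pos hvol.ne' hSc.measure_lt_top.ne
  nlinarith

lemma crossing {n : ℕ} {S : Set (EuclideanSpace ℝ (Fin n))}
    (hSc : IsCompact S) (hconn : IsConnected S) (hvol : 0 < volume S)
    {f g : EuclideanSpace ℝ (Fin n) → ℝ}
    (hf : ContinuousOn f S) (hg : ContinuousOn g S)
    (hfi : ∫ x in S, f x = 1) (hgi : ∫ x in S, g x = 1) :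
    ∃ x ∈ S, f x = g x := by
  have hne := hconn.nonempty
  have hint : ∫ x in S, (f x - g x) = 0 := by
    rw [integral_sub (hf.integrableOn_compact hSc) (hg.integrableOn_compact hSc), hfi, hgi]
    ring
  have h1 : ∃ x ∈ S, g x ≤ f x := by
    by_contra hcon
    push_neg at hcon
    have := posint hSc hne hvol (hg.sub hf) (fun x hx => by show 0 < g x - f x; linarith [hcon x hx])
    have : ∫ x in S, (g x - f x) = 0 := by
      rw [integral_sub (hg.integrableOn_compact hSc) (hf.integrableOn_compact hSc), hfi, hgi]
      ring
    linarith [show ∫ x in S, (g - f) x = ∫ x in S, (g x - f x) from rfl]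
  have h2 : ∃ x ∈ S, f x ≤ g x := by
    by_contra hcon
    push_neg at hcon
    have := posint hSc hne hvol (hf.sub hg) (fun x hx => by show 0 < f x - g x; linarith [hcon x hx])
    linarith [show ∫ x in S, (f - g) x = ∫ x in S, (f x - g x) from rfl]
  obtain ⟨a, haS, ha⟩ := h1
  obtain ⟨b, hbS, hb⟩ := h2
  have hsub : Set.Icc ((f - g) b) ((f - g) a) ⊆ (f - g) '' S :=
    hconn.isPreconnected.intermediate_value hbS haS (hf.sub hg)
  have h0 : (0 : ℝ) ∈ Set.Icc ((f - g) b) ((f - g) a) := by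
    simp only [Pi.sub_apply, Set.mem_Icc]; constructor <;> linarith
  obtain ⟨x, hxS, hx⟩ := hsub h0
  exact ⟨x, hxS, by simpa [sub_eq_zero] using hx⟩

/-- Sup-norm error controlled by the Hilbert distance: if `f = ĝ_k` and `g = g*`
are continuous, take values in `[g_min, g_max]`, integrate to `1` on the
connected compact set `S` of positive Lebesgue measure, and `d_H(f,g) ≤ ε`, then
`‖f − g‖_∞ ≤ (g_max²/g_min) ε e^ε`. -/
theorem stmt11 {n : ℕ} (S : Set (EuclideanSpace ℝ (Fin n)))
    (hSc : IsCompact S) (hconn : IsConnected S) (hvol : 0 < volume S)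
    (f g : EuclideanSpace ℝ (Fin n) → ℝ)
    (hf : ContinuousOn f S) (hg : ContinuousOn g S)
    (gmin gmax : ℝ) (hgmin : 0 < gmin) (hmm : gmin ≤ gmax)
    (hfb : ∀ x ∈ S, gmin ≤ f x ∧ f x ≤ gmax)
    (hgb : ∀ x ∈ S, gmin ≤ g x ∧ g x ≤ gmax)
    (hfi : ∫ x in S, f x = 1) (hgi : ∫ x in S, g x = 1)
    (ε : ℝ)
    (hd : dH (fun x : S => f x.1) (fun x : S => g x.1) ≤ ε) :
    ∀ x ∈ S, |f x - g x| ≤ gmax ^ 2 / gmin * ε * Real.exp ε := by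
  have hne := hconn.nonempty
  haveI : Nonempty S := hne.to_subtype
  set r : S → ℝ := fun x => f x.1 / g x.1 with hr
  have hub : ∀ x : S, r x ≤ gmax / gmin := by
    intro x
    have h1 := hfb x.1 x.2
    have h2 := hgb x.1 x.2
    exact div_le_div₀ (by linarith) h1.2 hgmin h2.1
  have hlb : ∀ x : S, gmin / gmax ≤ r x := by
    intro x
    have h1 := hfb x.1 x.2
    have h2 := hgb x.1 x.2
    exact div_le_div₀ (by linarith) h1.1 (by linarith) h2.2
  have bddA : BddAbove (Set.range r) := ⟨gmax / gmin, by rintro y ⟨x, rfl⟩; exact hub x⟩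
  have bddB : BddBelow (Set.range r) := ⟨gmin / gmax, by rintro y ⟨x, rfl⟩; exact hlb x⟩
  set M := ⨆ x, r x with hM
  set m := ⨅ x, r x with hm
  have hmpos : 0 < m := lt_of_lt_of_le (div_pos hgmin (by linarith)) (le_ciInf hlb)
  obtain ⟨x₀, hx₀S, hx₀⟩ := crossing hSc hconn hvol hf hg hfi hgi
  have hg₀ : g x₀ ≠ 0 := by have := hgb x₀ hx₀S; linarith [this.1]
  have hrx₀ : r ⟨x₀, hx₀S⟩ = 1 := by simp [hr, hx₀, div_self hg₀]
  have hm1 : m ≤ 1 := hrx₀ ▸ ciInf_le bddB ⟨x₀, hx₀S⟩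
  have hM1 : 1 ≤ M := hrx₀ ▸ le_ciSup bddA ⟨x₀, hx₀S⟩
  have hdd : Real.log (M / m) ≤ ε := hd
  have hMm : M / m ≤ Real.exp ε := by
    rwa [Real.log_le_iff_le_exp (by positivity)] at hdd
  have hMle : M ≤ Real.exp ε * m := by
    rwa [div_le_iff₀ hmpos] at hMm
  have hexp1 : 1 ≤ Real.exp ε := by nlinarith [Real.exp_pos ε]
  have hε : 0 ≤ ε := Real.exp_le_exp.mp (by rwa [Real.exp_zero])
  have hMexp : M ≤ Real.exp ε := by nlinarith
  have hmexp : Real.exp (-ε) ≤ m := by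
    have h1 : Real.exp (-ε) * Real.exp ε = 1 := by
      rw [← Real.exp_add]; simp
    nlinarith [Real.exp_pos (-ε)]
  have key1 : Real.exp ε - 1 ≤ ε * Real.exp ε := by
    have h1 := Real.add_one_le_exp (-ε)
    have h2 : Real.exp (-ε) * Real.exp ε = 1 := by rw [← Real.exp_add]; simp
    nlinarith [Real.exp_pos ε]
  have key2 : 1 - Real.exp (-ε) ≤ ε := by linarith [Real.add_one_le_exp (-ε)]
  have hfrac : gmax ≤ gmax ^ 2 / gmin := by
    rw [le_div_iff₀ hgmin]; nlinarith
  intro x hx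
  have h1 := hfb x hx
  have h2 := hgb x hx
  have hgpos : 0 < g x := by linarith [h2.1]
  have hru : f x / g x ≤ M := le_ciSup bddA ⟨x, hx⟩
  have hrl : m ≤ f x / g x := ciInf_le bddB ⟨x, hx⟩
  have hfu : f x ≤ Real.exp ε * g x := by
    rw [div_le_iff₀ hgpos] at hru
    calc f x ≤ M * g x := hru
      _ ≤ Real.exp ε * g x := mul_le_mul_of_nonneg_right hMexp hgpos.le
  have hfl : Real.exp (-ε) * g x ≤ f x := by
    rw [le_div_iff₀ hgpos] at hrl
    calc Real.exp (-ε) * g x ≤ m * g x := mul_le_mul_of_nonneg_right hmexp hgpos.le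
      _ ≤ f x := hrl
  rw [abs_sub_le_iff]
  constructor
  · calc f x - g x ≤ (Real.exp ε - 1) * g x := by linarith
      _ ≤ (Real.exp ε - 1) * gmax := mul_le_mul_of_nonneg_left h2.2 (by linarith)
      _ ≤ ε * Real.exp ε * gmax := mul_le_mul_of_nonneg_right key1 (by linarith)
      _ = gmax * (ε * Real.exp ε) := by ring
      _ ≤ gmax ^ 2 / gmin * (ε * Real.exp ε) :=
        mul_le_mul_of_nonneg_right hfrac (mul_nonneg hε (Real.exp_pos ε).le)
      _ = gmax ^ 2 / gmin * ε * Real.exp ε := by ring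
  · calc g x - f x ≤ (1 - Real.exp (-ε)) * g x := by linarith
      _ ≤ (1 - Real.exp (-ε)) * gmax := by
        have h3 : Real.exp (-ε) ≤ 1 := by
          rw [Real.exp_le_one_iff]; linarith
        exact mul_le_mul_of_nonneg_left h2.2 (by linarith)
      _ ≤ ε * gmax := mul_le_mul_of_nonneg_right key2 (by linarith)
      _ = ε * gmax * 1 := by ring
      _ ≤ ε * gmax * Real.exp ε := by
        exact mul_le_mul_of_nonneg_left hexp1 (mul_nonneg hε (by linarith))
      _ = ε * Real.exp ε * gmax := by ring
      _ = gmax * (ε * Real.exp ε) := by ring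
      _ ≤ gmax ^ 2 / gmin * (ε * Real.exp ε) :=
        mul_le_mul_of_nonneg_right hfrac (mul_nonneg hε (Real.exp_pos ε).le)
      _ = gmax ^ 2 / gmin * ε * Real.exp ε := by ring
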